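/- Let G be a real symmetric 4×4 matrix in emission form with det G < 0, set H = −det G, and for pairwise distinct indices A, B, C, D define the scale parameters μ^A = √( H / (2·G_{BC}·G_{BD}·G_{CD}) ) > 0. Define the normalized entries Ĝ_{AB} = G_{AB}/(μ^A · μ^B) for A ≠ B. Then the normalized matrix has the paired structure Ĝ₁₄ = Ĝ₂₃ =: Â, Ĝ₁₃ = Ĝ₂₄ =: B̂, Ĝ₁₂ = Ĝ₃₄ =: Ĉ, with Â, B̂, Ĉ > 0, and these satisfy the constraint Â⁴ + B̂⁴ + Ĉ⁴ − 2Â²B̂² − 2Â²Ĉ² − 2B̂²Ĉ² + 2ÂB̂Ĉ = 0. -/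

import Mathlib

set_option maxHeartbeats 1000000 in
/-- Let `G` be a real symmetric 4×4 matrix in emission form with
`det G < 0`, `H = −det G`, and for pairwise distinct indices `A, B, C, D` let the
scale parameter be `μ A = √(H/(2·G_{BC}·G_{BD}·G_{CD}))`. With the normalized entries
`Ĝ_{AB} = G_{AB}/(μ A · μ B)` for `A ≠ B`, each `μ A` is positive, the normalized
matrix has the paired structure `Ĝ₁₄ = Ĝ₂₃ = Â`, `Ĝ₁₃ = Ĝ₂₄ = B̂`, `Ĝ₁₂ = Ĝ₃₄ = Ĉ`
with `Â, B̂, Ĉ > 0`, and these satisfy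
`Â⁴ + B̂⁴ + Ĉ⁴ − 2Â²B̂² − 2Â²Ĉ² − 2B̂²Ĉ² + 2ÂB̂Ĉ = 0`. -/
theorem stmt_19 (G : Matrix (Fin 4) (Fin 4) ℝ)
    (hsymm : G.IsSymm) (hdiag : ∀ i, G i i = 0)
    (hpos : ∀ i j, i ≠ j → 0 < G i j) (hdet : G.det < 0)
    (μ : Fin 4 → ℝ)
    (hμ : ∀ A B C D : Fin 4, A ≠ B → A ≠ C → A ≠ D → B ≠ C → B ≠ D → C ≠ D →
      μ A = Real.sqrt ((-G.det) / (2 * G B C * G B D * G C D)))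
    (Ghat : Fin 4 → Fin 4 → ℝ)
    (hGhat : ∀ A B : Fin 4, A ≠ B → Ghat A B = G A B / (μ A * μ B)) :
    (∀ A : Fin 4, 0 < μ A)
    ∧ Ghat 0 3 = Ghat 1 2
    ∧ Ghat 0 2 = Ghat 1 3
    ∧ Ghat 0 1 = Ghat 2 3
    ∧ 0 < Ghat 0 3 ∧ 0 < Ghat 0 2 ∧ 0 < Ghat 0 1
    ∧ Ghat 0 3 ^ 4 + Ghat 0 2 ^ 4 + Ghat 0 1 ^ 4
        - 2 * Ghat 0 3 ^ 2 * Ghat 0 2 ^ 2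
        - 2 * Ghat 0 3 ^ 2 * Ghat 0 1 ^ 2
        - 2 * Ghat 0 2 ^ 2 * Ghat 0 1 ^ 2
        + 2 * Ghat 0 3 * Ghat 0 2 * Ghat 0 1 = 0 := by
  set a := G 0 1 with ha
  set b := G 0 2 with hb
  set c := G 0 3 with hc
  set d := G 1 2 with hd
  set e := G 1 3 with he
  set f := G 2 3 with hf
  have hap : 0 < a := hpos 0 1 (by decide)
  have hbp : 0 < b := hpos 0 2 (by decide)
  have hcp : 0 < c := hpos 0 3 (by decide)
  have hdp : 0 < d := hpos 1 2 (by decide)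
  have hep : 0 < e := hpos 1 3 (by decide)
  have hfp : 0 < f := hpos 2 3 (by decide)
  set H := -G.det with hH
  have hHpos : 0 < H := by simp [hH]; linarith
  have h10 : G 1 0 = a := by rw [ha]; exact hsymm.apply 0 1
  have h20 : G 2 0 = b := by rw [hb]; exact hsymm.apply 0 2
  have h30 : G 3 0 = c := by rw [hc]; exact hsymm.apply 0 3
  have h21 : G 2 1 = d := by rw [hd]; exact hsymm.apply 1 2
  have h31 : G 3 1 = e := by rw [he]; exact hsymm.apply 1 3
  have h32 : G 3 2 = f := by rw [hf]; exact hsymm.apply 2 3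
  have hGeq : G = !![0,a,b,c; a,0,d,e; b,d,0,f; c,e,f,0] := by
    ext i j
    fin_cases i <;> fin_cases j <;>
      simp [hdiag, h10, h20, h30, h21, h31, h32, ha, hb, hc, hd, he, hf]
  have hHv : H = 2*a*c*d*f + 2*a*b*e*f + 2*b*c*d*e - a^2*f^2 - b^2*e^2 - c^2*d^2 := by
    rw [hH, hGeq]
    simp [Matrix.det_succ_row_zero, Fin.sum_univ_succ, Fin.succAbove, Fin.castSucc, Fin.castAdd, Fin.castLE]
    ring
  have hμ0 : μ 0 = Real.sqrt (H / (2*d*e*f)) := hμ 0 1 2 3 (by decide) (by decide) (by decide) (by decide) (by decide) (by decide)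
  have hμ1 : μ 1 = Real.sqrt (H / (2*b*c*f)) := hμ 1 0 2 3 (by decide) (by decide) (by decide) (by decide) (by decide) (by decide)
  have hμ2 : μ 2 = Real.sqrt (H / (2*a*c*e)) := hμ 2 0 1 3 (by decide) (by decide) (by decide) (by decide) (by decide) (by decide)
  have hμ3 : μ 3 = Real.sqrt (H / (2*a*b*d)) := hμ 3 0 1 2 (by decide) (by decide) (by decide) (by decide) (by decide) (by decide)
  have hμ0p : 0 < μ 0 := by rw [hμ0]; exact Real.sqrt_pos.mpr (by positivity)
  have hμ1p : 0 < μ 1 := by rw [hμ1]; exact Real.sqrt_pos.mpr (by positivity)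
  have hμ2p : 0 < μ 2 := by rw [hμ2]; exact Real.sqrt_pos.mpr (by positivity)
  have hμ3p : 0 < μ 3 := by rw [hμ3]; exact Real.sqrt_pos.mpr (by positivity)
  have hμ0sq : μ 0 ^ 2 = H / (2*d*e*f) := by rw [hμ0]; exact Real.sq_sqrt (by positivity)
  have hμ1sq : μ 1 ^ 2 = H / (2*b*c*f) := by rw [hμ1]; exact Real.sq_sqrt (by positivity)
  have hμ2sq : μ 2 ^ 2 = H / (2*a*c*e) := by rw [hμ2]; exact Real.sq_sqrt (by positivity)
  have hμ3sq : μ 3 ^ 2 = H / (2*a*b*d) := by rw [hμ3]; exact Real.sq_sqrt (by positivity)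
  have hμall : ∀ A : Fin 4, 0 < μ A := by
    intro A; fin_cases A <;> assumption
  have hG03 : Ghat 0 3 = c / (μ 0 * μ 3) := by rw [hGhat 0 3 (by decide), hc]
  have hG02 : Ghat 0 2 = b / (μ 0 * μ 2) := by rw [hGhat 0 2 (by decide), hb]
  have hG01 : Ghat 0 1 = a / (μ 0 * μ 1) := by rw [hGhat 0 1 (by decide), ha]
  have hG12 : Ghat 1 2 = d / (μ 1 * μ 2) := by rw [hGhat 1 2 (by decide), hd]
  have hG13 : Ghat 1 3 = e / (μ 1 * μ 3) := by rw [hGhat 1 3 (by decide), he]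
  have hG23 : Ghat 2 3 = f / (μ 2 * μ 3) := by rw [hGhat 2 3 (by decide), hf]
  have hG03p : 0 < Ghat 0 3 := by rw [hG03]; positivity
  have hG02p : 0 < Ghat 0 2 := by rw [hG02]; positivity
  have hG01p : 0 < Ghat 0 1 := by rw [hG01]; positivity
  have hG12p : 0 < Ghat 1 2 := by rw [hG12]; positivity
  have hG13p : 0 < Ghat 1 3 := by rw [hG13]; positivity
  have hG23p : 0 < Ghat 2 3 := by rw [hG23]; positivity
  have key : ∀ x y : ℝ, 0 < x → 0 < y → x ^ 2 = y ^ 2 → x = y := by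
    intro x y hx hy h
    have hx' : x = Real.sqrt (x ^ 2) := (Real.sqrt_sq hx.le).symm
    rw [hx', h, Real.sqrt_sq hy.le]
  have hHne : H ≠ 0 := ne_of_gt hHpos
  have hA2 : Ghat 0 3 ^ 2 = 4*a*b*c^2*d^2*e*f / H^2 := by
    rw [hG03, div_pow, mul_pow, hμ0sq, hμ3sq]
    field_simp; ring
  have hB2 : Ghat 0 2 ^ 2 = 4*a*b^2*c*d*e^2*f / H^2 := by
    rw [hG02, div_pow, mul_pow, hμ0sq, hμ2sq]
    field_simp; ring
  have hC2 : Ghat 0 1 ^ 2 = 4*a^2*b*c*d*e*f^2 / H^2 := by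
    rw [hG01, div_pow, mul_pow, hμ0sq, hμ1sq]
    field_simp; ring
  have hA2' : Ghat 1 2 ^ 2 = 4*a*b*c^2*d^2*e*f / H^2 := by
    rw [hG12, div_pow, mul_pow, hμ1sq, hμ2sq]
    field_simp; ring
  have hB2' : Ghat 1 3 ^ 2 = 4*a*b^2*c*d*e^2*f / H^2 := by
    rw [hG13, div_pow, mul_pow, hμ1sq, hμ3sq]
    field_simp; ring
  have hC2' : Ghat 2 3 ^ 2 = 4*a^2*b*c*d*e*f^2 / H^2 := by
    rw [hG23, div_pow, mul_pow, hμ2sq, hμ3sq]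
    field_simp; ring
  have hprod : μ 0 * μ 1 * μ 2 * μ 3 = H^2 / (4*(a*b*c*d*e*f)) := by
    rw [hμ0, hμ1, hμ2, hμ3, ← Real.sqrt_mul (by positivity), ← Real.sqrt_mul (by positivity),
      ← Real.sqrt_mul (by positivity)]
    rw [show H/(2*d*e*f) * (H/(2*b*c*f)) * (H/(2*a*c*e)) * (H/(2*a*b*d))
        = (H^2/(4*(a*b*c*d*e*f)))^2 by field_simp; ring]
    exact Real.sqrt_sq (by positivity)
  have hABC : Ghat 0 3 * Ghat 0 2 * Ghat 0 1 = 8*(a*b*c*d*e*f)^2 / H^3 := by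
    have h1 : Ghat 0 3 * Ghat 0 2 * Ghat 0 1 = (a*b*c) / (μ 0 ^ 2 * (μ 0 * μ 1 * μ 2 * μ 3)) := by
      rw [hG03, hG02, hG01]; field_simp
    rw [h1, hμ0sq, hprod]
    field_simp; ring
  refine ⟨hμall, ?_, ?_, ?_, hG03p, hG02p, hG01p, ?_⟩
  · exact key _ _ hG03p hG12p (by rw [hA2, hA2'])
  · exact key _ _ hG02p hG13p (by rw [hB2, hB2'])
  · exact key _ _ hG01p hG23p (by rw [hC2, hC2'])
  · have expand : Ghat 0 3 ^ 4 + Ghat 0 2 ^ 4 + Ghat 0 1 ^ 4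
        - 2 * Ghat 0 3 ^ 2 * Ghat 0 2 ^ 2
        - 2 * Ghat 0 3 ^ 2 * Ghat 0 1 ^ 2
        - 2 * Ghat 0 2 ^ 2 * Ghat 0 1 ^ 2
        + 2 * Ghat 0 3 * Ghat 0 2 * Ghat 0 1
        = (Ghat 0 3 ^ 2)^2 + (Ghat 0 2 ^ 2)^2 + (Ghat 0 1 ^ 2)^2
        - 2 * (Ghat 0 3 ^ 2) * (Ghat 0 2 ^ 2)
        - 2 * (Ghat 0 3 ^ 2) * (Ghat 0 1 ^ 2)
        - 2 * (Ghat 0 2 ^ 2) * (Ghat 0 1 ^ 2)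
        + 2 * (Ghat 0 3 * Ghat 0 2 * Ghat 0 1) := by ring
    have hne2 : 2*a*c*d*f + 2*a*b*e*f + 2*b*c*d*e - a^2*f^2 - b^2*e^2 - c^2*d^2 ≠ 0 := by
      rw [← hHv]; exact hHne
    rw [expand, hA2, hB2, hC2, hABC]
    clear_value H
    field_simp
    linear_combination (16 * (a*b*c*d*e*f)^2) * hHv
  done
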